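/- Let A, E : ℝ³ → ℝ³ and φ : ℝ³ → ℝ be smooth, and let a, e : ℝ³ → ℝ³ be smooth compactly supported vector fields with div e = 0. Then the first variation of the energy functional in the direction (a, e) equals the contraction of the Maxwell evolution vector field with the pre-symplectic pairing: ∫_{ℝ³} ( E · e + ½ Σ_{j,k=1}^3 (∂_j A_k − ∂_k A_j)(∂_j a_k − ∂_k a_j) ) dx = ∫_{ℝ³} ( (E + ∇φ) · e − a · (ΔA − ∇(div A)) ) dx, i.e. dℰ(A, E)(a, e) = ω(Γ_φ(A, E), (a, e)), for every choice of the gauge function φ. -/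

import Mathlib

open MeasureTheory

/-- Partial derivative `∂_j f` of a scalar function on `ℝ³`. -/
noncomputable def pd (f : (Fin 3 → ℝ) → ℝ) (j : Fin 3) (x : Fin 3 → ℝ) : ℝ :=
  fderiv ℝ f x (Pi.single j 1)

/-- Divergence `div F = Σ_j ∂_j F_j` of a vector field on `ℝ³`. -/
noncomputable def div3 (F : (Fin 3 → ℝ) → (Fin 3 → ℝ)) (x : Fin 3 → ℝ) : ℝ :=
  ∑ j, pd (fun y => F y j) j x

/-- Laplacian `Δf = Σ_j ∂_j² f` of a scalar function on `ℝ³`. -/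
noncomputable def lap3 (f : (Fin 3 → ℝ) → ℝ) (x : Fin 3 → ℝ) : ℝ :=
  ∑ j, pd (pd f j) j x

/-- Curl of a vector field on `ℝ³`. -/

lemma contDiff_pd {f : (Fin 3 → ℝ) → ℝ} (hf : ContDiff ℝ (⊤ : ℕ∞) f) (j : Fin 3) :
    ContDiff ℝ (⊤ : ℕ∞) (pd f j) := by
  have h1 : ContDiff ℝ (⊤ : ℕ∞) (fderiv ℝ f) := hf.fderiv_right (by simp)
  exact (ContinuousLinearMap.apply ℝ ℝ (Pi.single j 1)).contDiff.comp h1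

lemma hcs_pd {f : (Fin 3 → ℝ) → ℝ} (hf : HasCompactSupport f) (j : Fin 3) :
    HasCompactSupport (pd f j) := by
  have h1 : HasCompactSupport (fderiv ℝ f) := hf.fderiv ℝ
  exact h1.comp_left (g := fun L : (Fin 3 → ℝ) →L[ℝ] ℝ => L (Pi.single j 1)) (by simp)

lemma integral_pd_zero {f : (Fin 3 → ℝ) → ℝ} (hf : ContDiff ℝ (⊤ : ℕ∞) f)
    (hc : HasCompactSupport f) (j : Fin 3) : ∫ x : Fin 3 → ℝ, pd f j x = 0 := by
  obtain ⟨C, hL⟩ := ContDiff.lipschitzWith_of_hasCompactSupport hc hf (by simp)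
  have h0 := LipschitzWith.integral_lineDeriv_mul_eq (μ := volume) (LipschitzWith.const' (K := 0) (1 : ℝ)) hL hc
    (-(Pi.single j 1))
  have h1 : ∀ x : Fin 3 → ℝ, lineDeriv ℝ f x (Pi.single j 1) = pd f j x := fun x =>
    (hf.differentiable (by simp) x).lineDeriv_eq_fderiv
  have h2 : ∀ (x : Fin 3 → ℝ) (v : Fin 3 → ℝ), lineDeriv ℝ (fun _ => (1:ℝ)) x v = 0 := by
    intro x v; simp [lineDeriv]
  simp only [h2, zero_mul, integral_zero, neg_neg, mul_one, h1] at h0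
  exact h0.symm

lemma pd_mul {f g : (Fin 3 → ℝ) → ℝ} (hf : ContDiff ℝ (⊤ : ℕ∞) f) (hg : ContDiff ℝ (⊤ : ℕ∞) g)
    (j : Fin 3) (x : Fin 3 → ℝ) :
    pd (fun y => f y * g y) j x = pd f j x * g x + f x * pd g j x := by
  have h := fderiv_fun_mul (𝕜 := ℝ) (hf.differentiable (by simp) x) (hg.differentiable (by simp) x)
  simp only [pd, h, ContinuousLinearMap.add_apply, ContinuousLinearMap.smul_apply, smul_eq_mul]
  ring

lemma integrable_mul_cs {f g : (Fin 3 → ℝ) → ℝ} (hf : Continuous f) (hg : Continuous g)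
    (hcg : HasCompactSupport g) : Integrable (fun x : Fin 3 → ℝ => f x * g x) :=
  (hf.mul hg).integrable_of_hasCompactSupport hcg.mul_left

lemma ibp {f g : (Fin 3 → ℝ) → ℝ} (hf : ContDiff ℝ (⊤ : ℕ∞) f) (hg : ContDiff ℝ (⊤ : ℕ∞) g)
    (hcg : HasCompactSupport g) (j : Fin 3) :
    ∫ x : Fin 3 → ℝ, f x * pd g j x = - ∫ x : Fin 3 → ℝ, pd f j x * g x := by
  have hint1 : Integrable (fun x : Fin 3 → ℝ => pd f j x * g x) :=
    integrable_mul_cs (contDiff_pd hf j).continuous hg.continuous hcg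
  have hint2 : Integrable (fun x : Fin 3 → ℝ => f x * pd g j x) :=
    integrable_mul_cs hf.continuous (contDiff_pd hg j).continuous (hcs_pd hcg j)
  have h0 := integral_pd_zero (hf.mul hg) hcg.mul_left j
  have h1 : (fun x : Fin 3 → ℝ => pd (fun y => f y * g y) j x)
      = fun x => pd f j x * g x + f x * pd g j x := funext fun x => pd_mul hf hg j x
  rw [h1, integral_add hint1 hint2] at h0
  linarith

lemma pd_sum {ι : Type*} (s : Finset ι) (g : ι → (Fin 3 → ℝ) → ℝ)
    (hg : ∀ i, Differentiable ℝ (g i)) (j : Fin 3) (x : Fin 3 → ℝ) :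
    pd (fun y => ∑ i ∈ s, g i y) j x = ∑ i ∈ s, pd (g i) j x := by
  simp only [pd]
  rw [fderiv_fun_sum (fun i _ => (hg i x))]
  simp

lemma pd_sub {f g : (Fin 3 → ℝ) → ℝ} (hf : Differentiable ℝ f) (hg : Differentiable ℝ g)
    (j : Fin 3) (x : Fin 3 → ℝ) :
    pd (fun y => f y - g y) j x = pd f j x - pd g j x := by
  simp only [pd]
  rw [fderiv_fun_sub (hf x) (hg x)]
  simp

lemma pd_comm {f : (Fin 3 → ℝ) → ℝ} (hf : ContDiff ℝ (⊤ : ℕ∞) f) (j k : Fin 3) (x : Fin 3 → ℝ) :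
    pd (pd f j) k x = pd (pd f k) j x := by
  have hdf : ContDiff ℝ (⊤ : ℕ∞) (fderiv ℝ f) := hf.fderiv_right (by simp)
  have key : ∀ v w : Fin 3 → ℝ, pd (fun y => fderiv ℝ f y v) 0 x = 0 → True := fun _ _ _ => trivial
  have happ : ∀ (v : Fin 3 → ℝ) (w : Fin 3 → ℝ),
      fderiv ℝ (fun y => fderiv ℝ f y v) x w = fderiv ℝ (fderiv ℝ f) x w v := by
    intro v w
    have := fderiv_clm_apply (𝕜 := ℝ) (c := fderiv ℝ f) (u := fun _ => v)
      (hdf.differentiable (by simp) x) (differentiableAt_const v)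
    simp [this]
  have hsymm := second_derivative_symmetric (f := f) (f' := fderiv ℝ f)
    (f'' := fderiv ℝ (fderiv ℝ f) x)
    (fun y => (hf.differentiable (by simp) y).hasFDerivAt)
    ((hdf.differentiable (by simp) x).hasFDerivAt)
  show fderiv ℝ (fun y => fderiv ℝ f y (Pi.single j 1)) x (Pi.single k 1)
      = fderiv ℝ (fun y => fderiv ℝ f y (Pi.single k 1)) x (Pi.single j 1)
  rw [happ, happ, hsymm]

noncomputable def curl3 (F : (Fin 3 → ℝ) → (Fin 3 → ℝ)) (x : Fin 3 → ℝ) : Fin 3 → ℝ :=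
  ![pd (fun y => F y 2) 1 x - pd (fun y => F y 1) 2 x,
    pd (fun y => F y 0) 2 x - pd (fun y => F y 2) 0 x,
    pd (fun y => F y 1) 0 x - pd (fun y => F y 0) 1 x]

/-- The identity `dℰ(A,E)(a,e) = ω(Γ_φ(A,E),(a,e))` determining the Hamiltonian
of free Electrodynamics on the Gauss-constraint subspace: for smooth fields
`A, E, φ` and smooth compactly supported `(a, e)` with `div e = 0`, the first
variation of the energy in the direction `(a, e)` equals the contraction of the
Maxwell evolution vector field `Γ_φ(A,E) = (E + ∇φ, ΔA − ∇ div A)` with the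
pre-symplectic pairing. -/
theorem stmt17 (A E : (Fin 3 → ℝ) → (Fin 3 → ℝ)) (φ : (Fin 3 → ℝ) → ℝ)
    (hA : ContDiff ℝ (⊤ : ℕ∞) A) (hE : ContDiff ℝ (⊤ : ℕ∞) E)
    (hφ : ContDiff ℝ (⊤ : ℕ∞) φ)
    (a e : (Fin 3 → ℝ) → (Fin 3 → ℝ))
    (ha : ContDiff ℝ (⊤ : ℕ∞) a) (hca : HasCompactSupport a)
    (he : ContDiff ℝ (⊤ : ℕ∞) e) (hce : HasCompactSupport e)
    (hdive : ∀ x : Fin 3 → ℝ, div3 e x = 0) :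
    (∫ x : Fin 3 → ℝ, (∑ i, E x i * e x i
        + (1/2) * ∑ j, ∑ k, (pd (fun y => A y k) j x - pd (fun y => A y j) k x)
            * (pd (fun y => a y k) j x - pd (fun y => a y j) k x)))
      = ∫ x : Fin 3 → ℝ, (∑ i, (E x i + pd φ i x) * e x i
          - ∑ i, a x i * (lap3 (fun y => A y i) x - pd (div3 A) i x)) := by

  classical
  have hAi : ∀ i : Fin 3, ContDiff ℝ (⊤ : ℕ∞) (fun y => A y i) := fun i => contDiff_pi.mp hA i
  have hEi : ∀ i : Fin 3, ContDiff ℝ (⊤ : ℕ∞) (fun y => E y i) := fun i => contDiff_pi.mp hE i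
  have hai : ∀ i : Fin 3, ContDiff ℝ (⊤ : ℕ∞) (fun y => a y i) := fun i => contDiff_pi.mp ha i
  have hei : ∀ i : Fin 3, ContDiff ℝ (⊤ : ℕ∞) (fun y => e y i) := fun i => contDiff_pi.mp he i
  have hcai : ∀ i : Fin 3, HasCompactSupport (fun y => a y i) := fun i =>
    hca.comp_left (g := fun v : Fin 3 → ℝ => v i) rfl
  have hcei : ∀ i : Fin 3, HasCompactSupport (fun y => e y i) := fun i =>
    hce.comp_left (g := fun v : Fin 3 → ℝ => v i) rfl
  have hFsm : ∀ j k : Fin 3, ContDiff ℝ (⊤ : ℕ∞)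
      (fun x => pd (fun y => A y k) j x - pd (fun y => A y j) k x) := fun j k =>
    (contDiff_pd (hAi k) j).sub (contDiff_pd (hAi j) k)
  have hdivA : ContDiff ℝ (⊤ : ℕ∞) (div3 A) := by
    unfold div3
    exact ContDiff.sum fun j _ => contDiff_pd (hAi j) j
  have hlapc : ∀ i : Fin 3, Continuous (lap3 (fun y => A y i)) := by
    intro i
    unfold lap3
    exact continuous_finset_sum _ fun j _ => (contDiff_pd (contDiff_pd (hAi i) j) j).continuous
  -- integrability of the pieces
  have hintS : Integrable (fun x : Fin 3 → ℝ => ∑ i, E x i * e x i) :=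
    integrable_finset_sum _ fun i _ =>
      integrable_mul_cs (hEi i).continuous (hei i).continuous (hcei i)
  have hintT : Integrable (fun x : Fin 3 → ℝ =>
      ∑ j, ∑ k, (pd (fun y => A y k) j x - pd (fun y => A y j) k x)
        * pd (fun y => a y k) j x) :=
    integrable_finset_sum _ fun j _ => integrable_finset_sum _ fun k _ =>
      integrable_mul_cs (hFsm j k).continuous (contDiff_pd (hai k) j).continuous
        (hcs_pd (hcai k) j)
  have hintU : Integrable (fun x : Fin 3 → ℝ => ∑ i, pd φ i x * e x i) :=
    integrable_finset_sum _ fun i _ =>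
      integrable_mul_cs (contDiff_pd hφ i).continuous (hei i).continuous (hcei i)
  have hintVi : ∀ i : Fin 3, Integrable (fun x : Fin 3 → ℝ =>
      a x i * (lap3 (fun y => A y i) x - pd (div3 A) i x)) := by
    intro i
    have hc : Continuous fun x : Fin 3 → ℝ => lap3 (fun y => A y i) x - pd (div3 A) i x :=
      (hlapc i).sub (contDiff_pd hdivA i).continuous
    have := integrable_mul_cs hc (hai i).continuous (hcai i)
    simpa [mul_comm] using this
  have hintV : Integrable (fun x : Fin 3 → ℝ =>
      ∑ i, a x i * (lap3 (fun y => A y i) x - pd (div3 A) i x)) :=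
    integrable_finset_sum _ fun i _ => hintVi i
  -- pointwise rewriting of both integrands
  have hL : ∀ x : Fin 3 → ℝ,
      (∑ i, E x i * e x i
        + (1/2) * ∑ j, ∑ k, (pd (fun y => A y k) j x - pd (fun y => A y j) k x)
            * (pd (fun y => a y k) j x - pd (fun y => a y j) k x))
      = (∑ i, E x i * e x i)
        + ∑ j, ∑ k, (pd (fun y => A y k) j x - pd (fun y => A y j) k x)
            * pd (fun y => a y k) j x := by
    intro x
    simp only [Fin.sum_univ_three]
    ring
  have hR : ∀ x : Fin 3 → ℝ,
      (∑ i, (E x i + pd φ i x) * e x i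
        - ∑ i, a x i * (lap3 (fun y => A y i) x - pd (div3 A) i x))
      = (∑ i, E x i * e x i)
        + ((∑ i, pd φ i x * e x i)
          - ∑ i, a x i * (lap3 (fun y => A y i) x - pd (div3 A) i x)) := by
    intro x
    simp only [Fin.sum_univ_three]
    ring
  -- the gauge term integrates to zero
  have hU : ∫ x : Fin 3 → ℝ, (∑ i, pd φ i x * e x i) = 0 := by
    rw [integral_finset_sum _ fun i _ =>
      integrable_mul_cs (contDiff_pd hφ i).continuous (hei i).continuous (hcei i)]
    have h1 : ∀ i : Fin 3, ∫ x : Fin 3 → ℝ, pd φ i x * e x i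
        = - ∫ x : Fin 3 → ℝ, φ x * pd (fun y => e y i) i x := by
      intro i
      have h2 := ibp hφ (hei i) (hcei i) i
      linarith
    have h3 : ∀ x : Fin 3 → ℝ, (∑ i, φ x * pd (fun y => e y i) i x) = 0 := by
      intro x
      rw [← Finset.mul_sum, show (∑ i, pd (fun y => e y i) i x) = div3 e x from rfl,
        hdive x, mul_zero]
    calc (∑ i : Fin 3, ∫ x : Fin 3 → ℝ, pd φ i x * e x i)
        = ∑ i : Fin 3, - ∫ x : Fin 3 → ℝ, φ x * pd (fun y => e y i) i x := by
          exact Finset.sum_congr rfl fun i _ => h1 i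
      _ = - ∑ i : Fin 3, ∫ x : Fin 3 → ℝ, φ x * pd (fun y => e y i) i x := by
          rw [Finset.sum_neg_distrib]
      _ = - ∫ x : Fin 3 → ℝ, ∑ i, φ x * pd (fun y => e y i) i x := by
          rw [integral_finset_sum _ fun i _ =>
            integrable_mul_cs hφ.continuous (contDiff_pd (hei i) i).continuous
              (hcs_pd (hcei i) i)]
      _ = 0 := by simp only [h3, integral_zero, neg_zero]
  -- the curl-curl term integrates by parts onto `a`
  have key : ∀ (k : Fin 3) (x : Fin 3 → ℝ),
      (∑ j, pd (fun y => pd (fun z => A z k) j y - pd (fun z => A z j) k y) j x)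
        = lap3 (fun y => A y k) x - pd (div3 A) k x := by
    intro k x
    have h1 : ∀ j : Fin 3,
        pd (fun y => pd (fun z => A z k) j y - pd (fun z => A z j) k y) j x
          = pd (pd (fun z => A z k) j) j x - pd (pd (fun z => A z j) k) j x := fun j =>
      pd_sub ((contDiff_pd (hAi k) j).differentiable (by simp))
        ((contDiff_pd (hAi j) k).differentiable (by simp)) j x
    have h2 : ∀ j : Fin 3, pd (pd (fun z => A z j) k) j x
        = pd (pd (fun z => A z j) j) k x := fun j => (pd_comm (hAi j) j k x).symm
    have h4 : pd (div3 A) k x = ∑ j, pd (pd (fun z => A z j) j) k x := by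
      show pd (fun y => ∑ j, pd (fun z => A z j) j y) k x = _
      exact pd_sum Finset.univ _ (fun j => (contDiff_pd (hAi j) j).differentiable (by simp)) k x
    simp only [h1, h2, Finset.sum_sub_distrib]
    rw [h4]
    rfl
  have hT : (∫ x : Fin 3 → ℝ,
        ∑ j, ∑ k, (pd (fun y => A y k) j x - pd (fun y => A y j) k x)
          * pd (fun y => a y k) j x)
      = - ∫ x : Fin 3 → ℝ,
          ∑ i, a x i * (lap3 (fun y => A y i) x - pd (div3 A) i x) := by
    rw [integral_finset_sum _ fun j _ => integrable_finset_sum _ fun k _ =>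
      integrable_mul_cs (hFsm j k).continuous (contDiff_pd (hai k) j).continuous
        (hcs_pd (hcai k) j)]
    have hrow : ∀ j : Fin 3, (∫ x : Fin 3 → ℝ,
        ∑ k, (pd (fun y => A y k) j x - pd (fun y => A y j) k x) * pd (fun y => a y k) j x)
        = ∑ k : Fin 3, ∫ x : Fin 3 → ℝ,
            (pd (fun y => A y k) j x - pd (fun y => A y j) k x) * pd (fun y => a y k) j x :=
      fun j => integral_finset_sum _ fun k _ =>
        integrable_mul_cs (hFsm j k).continuous (contDiff_pd (hai k) j).continuous
          (hcs_pd (hcai k) j)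
    simp only [hrow]
    have hib : ∀ j k : Fin 3, (∫ x : Fin 3 → ℝ,
        (pd (fun y => A y k) j x - pd (fun y => A y j) k x) * pd (fun y => a y k) j x)
        = - ∫ x : Fin 3 → ℝ,
            pd (fun y => pd (fun z => A z k) j y - pd (fun z => A z j) k y) j x * a x k :=
      fun j k => ibp (hFsm j k) (hai k) (hcai k) j
    simp only [hib]
    rw [Finset.sum_comm]
    have hcol : ∀ k : Fin 3,
        (∑ j : Fin 3, - ∫ x : Fin 3 → ℝ,
          pd (fun y => pd (fun z => A z k) j y - pd (fun z => A z j) k y) j x * a x k)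
        = - ∫ x : Fin 3 → ℝ, a x k * (lap3 (fun y => A y k) x - pd (div3 A) k x) := by
      intro k
      rw [Finset.sum_neg_distrib, ← integral_finset_sum _ fun j _ =>
        integrable_mul_cs (contDiff_pd
          ((contDiff_pd (hAi k) j).sub (contDiff_pd (hAi j) k)) j).continuous
          (hai k).continuous (hcai k)]
      congr 1
      apply integral_congr_ae
      filter_upwards with x
      rw [← Finset.sum_mul, key k x, mul_comm]
    simp only [hcol]
    rw [Finset.sum_neg_distrib, ← integral_finset_sum _ fun i _ => hintVi i]
  -- put everything together
  have hintUV : Integrable (fun x : Fin 3 → ℝ =>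
      (∑ i, pd φ i x * e x i)
        - ∑ i, a x i * (lap3 (fun y => A y i) x - pd (div3 A) i x)) := hintU.sub hintV
  simp only [hL, hR]
  rw [integral_add hintS hintT, integral_add hintS hintUV,
    integral_sub hintU hintV, hU, hT]
  ring
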